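/- Let F be a free group, a ∈ F with a ≠ 1, and n a nonzero integer. If g ∈ F satisfies g * a^n * g⁻¹ = a^n, then g commutes with a. -/

import Mathlib

set_option linter.unusedSectionVars false

namespace FreeGroupUR

open FreeGroup List

variable {α : Type*} [DecidableEq α]

/-- `p` immediately followed by `q` cancels. -/
def Cancels (p q : α × Bool) : Prop := p.1 = q.1 ∧ p.2 = !q.2

lemma cancels_inv_self (p : α × Bool) : Cancels (p.1, !p.2) p := ⟨rfl, rfl⟩

/-- A word is reduced: no adjacent cancelling pair. -/
def Reduced (L : List (α × Bool)) : Prop := L.Chain' fun p q => ¬ Cancels p q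

lemma Reduced.infix {L M : List (α × Bool)} (h : Reduced L) (hm : M <:+: L) : Reduced M :=
  List.IsChain.infix h hm

lemma reduce_eq_self {L : List (α × Bool)} (h : Reduced L) : reduce L = L := by
  induction L with
  | nil => rfl
  | cons x L ih =>
    have hL : Reduced L := h.tail
    rw [reduce.cons, ih hL]
    cases L with
    | nil => rfl
    | cons hd tl =>
      have hx : ¬ Cancels x hd := (List.isChain_cons_cons.mp h).1
      simp only [Cancels] at hx
      simp [hx]

lemma reduced_reduce (L : List (α × Bool)) : Reduced (reduce L) := by
  induction L with
  | nil => exact List.isChain_nil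
  | cons x L ih =>
    rw [reduce.cons]
    cases hr : reduce L with
    | nil => exact List.isChain_singleton x
    | cons hd tl =>
      rw [hr] at ih
      by_cases hc : x.1 = hd.1 ∧ x.2 = !hd.2
      · simp only [hc, and_self, if_true]
        exact ih.tail
      · simp only [hc, if_false]
        exact List.isChain_cons_cons.mpr ⟨fun h => hc ⟨h.1, h.2⟩, ih⟩

lemma toWord_mk_eq {L : List (α × Bool)} (h : Reduced L) : (mk L).toWord = L := by
  rw [toWord_mk, reduce_eq_self h]

lemma reduced_toWord (x : FreeGroup α) : Reduced x.toWord := by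
  rcases x with ⟨L⟩
  rw [quot_mk_eq_mk, toWord_mk]
  exact reduced_reduce L

/-- inverse of a single letter -/
def linv (p : α × Bool) : α × Bool := (p.1, !p.2)

lemma invRev_def (L : List (α × Bool)) : invRev L = (L.map linv).reverse := by
  simp [invRev, linv, List.map_reverse]

lemma invRev_append (L M : List (α × Bool)) :
    invRev (L ++ M) = invRev M ++ invRev L := by
  simp [invRev_def]

lemma invRev_cons (p : α × Bool) (L : List (α × Bool)) :
    invRev (p :: L) = invRev L ++ [(p.1, !p.2)] := by
  simp [invRev_def, linv]

lemma head?_invRev (L : List (α × Bool)) :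
    (invRev L).head? = L.getLast?.map linv := by
  rw [invRev_def, head?_reverse, getLast?_map]

lemma getLast?_invRev (L : List (α × Bool)) :
    (invRev L).getLast? = L.head?.map linv := by
  rw [invRev_def, getLast?_reverse, head?_map]

/-- Cyclically reduced word. -/
def CycRed (L : List (α × Bool)) : Prop :=
  Reduced L ∧ ∀ p ∈ L.getLast?, ∀ q ∈ L.head?, ¬ Cancels p q

/-- Decomposition into conjugate of a cyclically reduced core. -/
lemma decomp : ∀ (N : ℕ) (L : List (α × Bool)), L.length ≤ N → Reduced L →
    ∃ U C, L = U ++ C ++ invRev U ∧ CycRed C := by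
  intro N
  induction N with
  | zero =>
    intro L hL _
    have : L = [] := List.eq_nil_of_length_eq_zero (Nat.le_zero.mp hL)
    subst this
    exact ⟨[], [], by simp [invRev_empty], List.isChain_nil, by simp⟩
  | succ N ih =>
    intro L hL hred
    by_cases hcr : ∀ p ∈ L.getLast?, ∀ q ∈ L.head?, ¬ Cancels p q
    · exact ⟨[], L, by simp [invRev_empty], hred, hcr⟩
    · push_neg at hcr
      obtain ⟨p, hp, q, hq, hpq⟩ := hcr
      cases L with
      | nil => simp at hq
      | cons x T =>
        have hxq : x = q := by simpa using hq
        subst hxq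
        cases T with
        | nil =>
          have hpx : x = p := by simpa using hp
          subst hpx
          exact absurd hpq.2 (by simp)
        | cons t T' =>
          have hTne : t :: T' ≠ [] := by simp
          have hplast : (t :: T').getLast hTne = p := by
            have h1 : (x :: t :: T').getLast? = (t :: T').getLast? :=
              List.getLast?_cons_cons
            rw [h1, List.getLast?_eq_getLast hTne] at hp
            simpa using hp
          have hTsplit : t :: T' = (t :: T').dropLast ++ [p] := by
            conv_lhs => rw [← List.dropLast_append_getLast hTne]
            rw [hplast]
          have hpq' : p = (x.1, !x.2) := Prod.ext hpq.1 hpq.2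
          set M := (t :: T').dropLast with hM
          have hLsplit : x :: t :: T' = x :: M ++ [(x.1, !x.2)] := by
            rw [← hpq']
            conv_lhs => rw [hTsplit]
            rfl
          have hMred : Reduced M := by
            refine hred.infix ?_
            exact ⟨[x], [(x.1, !x.2)], by rw [hLsplit]; rfl⟩
          have hMlen : M.length ≤ N := by
            have hlen := congrArg List.length hLsplit
            simp at hlen hL
            omega
          obtain ⟨U, C, hMeq, hC⟩ := ih M hMlen hMred
          refine ⟨x :: U, C, ?_, hC⟩
          rw [hLsplit, hMeq, invRev_cons]
          simp

/-- If `U ++ invRev U` is reduced then `U = []`. -/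
lemma cancels_self_inv (p : α × Bool) : Cancels p (p.1, !p.2) :=
  ⟨rfl, (Bool.not_not _).symm⟩

lemma eq_nil_of_reduced_mul_inv {U : List (α × Bool)} (h : Reduced (U ++ invRev U)) :
    U = [] := by
  cases U with
  | nil => rfl
  | cons x T =>
    exfalso
    have hjunc := (List.isChain_append.mp h).2.2
    have hne : x :: T ≠ [] := by simp
    set p := (x :: T).getLast hne with hp
    have hlast : (x :: T).getLast? = some p := List.getLast?_eq_getLast hne
    have hhead : (invRev (x :: T)).head? = some (p.1, !p.2) := by
      rw [head?_invRev, hlast]; rfl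
    exact hjunc p (by rw [hlast]; rfl) _ (by rw [hhead]; rfl) (cancels_self_inv p)

/-- The `n`-fold concatenation of a word. -/
def powWord (n : ℕ) (C : List (α × Bool)) : List (α × Bool) := (List.replicate n C).flatten

lemma powWord_succ (n : ℕ) (C : List (α × Bool)) :
    powWord (n + 1) C = C ++ powWord n C := by
  simp [powWord, List.replicate_succ]

lemma powWord_length (n : ℕ) (C : List (α × Bool)) :
    (powWord n C).length = n * C.length := by
  simp [powWord, List.length_flatten, List.map_replicate, List.sum_replicate, smul_eq_mul]

lemma powWord_ne_nil {n : ℕ} {C : List (α × Bool)} (hn : n ≠ 0) (hC : C ≠ []) :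
    powWord n C ≠ [] := by
  intro h
  have := congrArg List.length h
  rw [powWord_length] at this
  simp at this
  rcases this with h | h
  · exact hn h
  · exact hC h

lemma powWord_head? {n : ℕ} (hn : n ≠ 0) {C : List (α × Bool)} (hC : C ≠ []) :
    (powWord n C).head? = C.head? := by
  cases n with
  | zero => exact absurd rfl hn
  | succ n => rw [powWord_succ, head?_append_of_ne_nil _ hC]

lemma powWord_getLast? {n : ℕ} (hn : n ≠ 0) {C : List (α × Bool)} (hC : C ≠ []) :
    (powWord n C).getLast? = C.getLast? := by
  induction n with
  | zero => exact absurd rfl hn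
  | succ n ih =>
    rw [powWord_succ]
    cases Nat.eq_zero_or_pos n with
    | inl h0 => subst h0; simp [powWord]
    | inr hpos =>
      rw [getLast?_append_of_ne_nil _ (powWord_ne_nil (by omega) hC)]
      exact ih (by omega)

lemma powWord_reduced {C : List (α × Bool)} (hC : CycRed C) (n : ℕ) :
    Reduced (powWord n C) := by
  induction n with
  | zero => exact List.isChain_nil
  | succ n ih =>
    rw [powWord_succ]
    refine List.isChain_append.mpr ⟨hC.1, ih, ?_⟩
    intro p hp q hq
    rcases Nat.eq_zero_or_pos n with h0 | hpos
    · subst h0; simp [powWord] at hq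
    · have hCne : C ≠ [] := by rintro rfl; simp [powWord] at hq
      rw [powWord_head? (by omega) hCne] at hq
      exact hC.2 p hp q hq

lemma mk_powWord (n : ℕ) (C : List (α × Bool)) : (mk C) ^ n = mk (powWord n C) := by
  rw [pow_mk]; rfl

/-- Main structure lemma for powers. -/
lemma pow_toWord {U C : List (α × Bool)} (hred : Reduced (U ++ C ++ invRev U))
    (hC : CycRed C) (hCne : C ≠ []) {n : ℕ} (hn : n ≠ 0) :
    (mk (U ++ C ++ invRev U)) ^ n = mk (U ++ powWord n C ++ invRev U) ∧
      Reduced (U ++ powWord n C ++ invRev U) := by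
  constructor
  · have h1 : mk (U ++ C ++ invRev U) = mk U * mk C * (mk U)⁻¹ := by
      rw [mul_mk, inv_mk, mul_mk]
    rw [h1, conj_pow, mk_powWord, inv_mk, mul_mk, mul_mk]
  · -- reducedness
    have hUC : Reduced (U ++ C) := (List.isChain_append.mp hred).1
    have hU : Reduced U := (List.isChain_append.mp hUC).1
    have hinvU : Reduced (invRev U) := (List.isChain_append.mp hred).2.1
    have hjun1 : ∀ p ∈ U.getLast?, ∀ q ∈ C.head?, ¬ Cancels p q :=
      (List.isChain_append.mp hUC).2.2
    have hjun2 : ∀ p ∈ (U ++ C).getLast?, ∀ q ∈ (invRev U).head?, ¬ Cancels p q :=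
      (List.isChain_append.mp hred).2.2
    refine List.isChain_append.mpr ⟨List.isChain_append.mpr ⟨hU, powWord_reduced hC n, ?_⟩, hinvU, ?_⟩
    · intro p hp q hq
      rw [powWord_head? hn hCne] at hq
      exact hjun1 p hp q hq
    · intro p hp q hq
      rw [getLast?_append_of_ne_nil _ (powWord_ne_nil hn hCne),
        powWord_getLast? hn hCne] at hp
      refine hjun2 p ?_ q hq
      rw [getLast?_append_of_ne_nil _ hCne]
      exact hp

/-- Core of the uniqueness argument: the conjugating prefixes can't have different lengths. -/
lemma uniq_not_lt {U₁ C₁ U₂ C₂ : List (α × Bool)} {n : ℕ} (hn : n ≠ 0)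
    (hC₁ : CycRed C₁) (h1 : C₁ ≠ []) (h2 : C₂ ≠ [])
    (hW : U₁ ++ powWord n C₁ ++ invRev U₁ = U₂ ++ powWord n C₂ ++ invRev U₂) :
    ¬ U₁.length < U₂.length := by
  intro hlt
  have hpre1 : U₁ <+: U₂ ++ powWord n C₂ ++ invRev U₂ := by
    rw [← hW]
    exact ⟨powWord n C₁ ++ invRev U₁, by simp⟩
  have hpre2 : U₂ <+: U₂ ++ powWord n C₂ ++ invRev U₂ :=
    ⟨powWord n C₂ ++ invRev U₂, by simp⟩
  have hUU : U₁ <+: U₂ := List.prefix_of_prefix_length_le hpre1 hpre2 (le_of_lt hlt)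
  obtain ⟨V, hV⟩ := hUU
  have hVne : V ≠ [] := by
    rintro rfl
    rw [List.append_nil] at hV
    subst hV
    exact lt_irrefl _ hlt
  subst hV
  rw [invRev_append] at hW
  have hW' : powWord n C₁ ++ invRev U₁ = (V ++ powWord n C₂ ++ invRev V) ++ invRev U₁ := by
    have := hW
    rw [List.append_assoc U₁ V, List.append_assoc U₁, List.append_assoc U₁] at this
    have := List.append_cancel_left this
    simp only [← List.append_assoc] at this
    exact this
  have hP : powWord n C₁ = V ++ powWord n C₂ ++ invRev V := List.append_cancel_right hW'
  -- head and last of powWord n C₁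
  obtain ⟨v, hv⟩ : ∃ v, V.head? = some v := by
    cases V with
    | nil => exact absurd rfl hVne
    | cons a _ => exact ⟨a, rfl⟩
  have hhead : C₁.head? = some v := by
    rw [← powWord_head? hn h1, hP, List.append_assoc, head?_append_of_ne_nil _ hVne, hv]
  have hlast : C₁.getLast? = some (v.1, !v.2) := by
    rw [← powWord_getLast? hn h1, hP,
      getLast?_append_of_ne_nil _ (by
        intro h
        have := congrArg List.length h
        rw [invRev_length] at this
        exact hVne (List.eq_nil_of_length_eq_zero this)),
      getLast?_invRev, hv]
    rfl
  exact hC₁.2 _ (by rw [hlast]; rfl) _ (by rw [hhead]; rfl) (cancels_inv_self v)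

lemma uniq {U₁ C₁ U₂ C₂ : List (α × Bool)} {n : ℕ} (hn : n ≠ 0)
    (hC₁ : CycRed C₁) (hC₂ : CycRed C₂) (h1 : C₁ ≠ []) (h2 : C₂ ≠ [])
    (hW : U₁ ++ powWord n C₁ ++ invRev U₁ = U₂ ++ powWord n C₂ ++ invRev U₂) :
    U₁ = U₂ ∧ C₁ = C₂ := by
  have hlen : U₁.length = U₂.length := by
    have hlt1 := uniq_not_lt hn hC₁ h1 h2 hW
    have hlt2 := uniq_not_lt hn hC₂ h2 h1 hW.symm
    omega
  have hpre1 : U₁ <+: U₂ ++ powWord n C₂ ++ invRev U₂ := by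
    rw [← hW]; exact ⟨powWord n C₁ ++ invRev U₁, by simp⟩
  have hpre2 : U₂ <+: U₂ ++ powWord n C₂ ++ invRev U₂ :=
    ⟨powWord n C₂ ++ invRev U₂, by simp⟩
  have hU : U₁ = U₂ :=
    (List.prefix_of_prefix_length_le hpre1 hpre2 (le_of_eq hlen)).eq_of_length hlen
  subst hU
  have hW' : powWord n C₁ ++ invRev U₁ = powWord n C₂ ++ invRev U₁ := by
    rw [List.append_assoc, List.append_assoc] at hW
    exact List.append_cancel_left hW
  have hP : powWord n C₁ = powWord n C₂ := List.append_cancel_right hW'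
  have hClen : C₁.length = C₂.length := by
    have := congrArg List.length hP
    rw [powWord_length, powWord_length] at this
    exact Nat.eq_of_mul_eq_mul_left (Nat.pos_of_ne_zero hn) this
  have hCpre1 : C₁ <+: powWord n C₂ := by
    rw [← hP]
    cases n with
    | zero => exact absurd rfl hn
    | succ n => rw [powWord_succ]; exact ⟨powWord n C₁, by simp⟩
  have hCpre2 : C₂ <+: powWord n C₂ := by
    cases n with
    | zero => exact absurd rfl hn
    | succ n => rw [powWord_succ]; exact ⟨powWord n C₂, by simp⟩
  exact ⟨rfl,
    (List.prefix_of_prefix_length_le hCpre1 hCpre2 (le_of_eq hClen)).eq_of_length hClen⟩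

/-- Unique `n`-th roots in the free group, natural exponent. -/
lemma root_unique (a b : FreeGroup α) (ha : a ≠ 1) {n : ℕ} (hn : n ≠ 0)
    (h : a ^ n = b ^ n) : a = b := by
  obtain ⟨U₁, C₁, hA, hC₁⟩ :=
    decomp a.toWord.length a.toWord le_rfl (reduced_toWord a)
  have hC₁ne : C₁ ≠ [] := by
    rintro rfl
    rw [List.append_nil] at hA
    have : Reduced (U₁ ++ invRev U₁) := hA ▸ reduced_toWord a
    have := eq_nil_of_reduced_mul_inv this
    subst this
    apply ha
    rw [← mk_toWord (x := a), hA]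
    simp [one_eq_mk, invRev_empty]
  have haw : a = mk (U₁ ++ C₁ ++ invRev U₁) := by rw [← hA, mk_toWord]
  have hredA : Reduced (U₁ ++ C₁ ++ invRev U₁) := hA ▸ reduced_toWord a
  obtain ⟨hApow, hApowRed⟩ := pow_toWord hredA hC₁ hC₁ne hn
  -- b ≠ 1
  have hb : b ≠ 1 := by
    rintro rfl
    rw [one_pow] at h
    have : (a ^ n).toWord = [] := by rw [h]; rfl
    rw [haw, hApow, toWord_mk_eq hApowRed] at this
    have := congrArg List.length this
    simp [powWord_length] at this
    rcases this.2.1 with h' | h'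
    · exact hn h'
    · exact hC₁ne h' 
  obtain ⟨U₂, C₂, hB, hC₂⟩ :=
    decomp b.toWord.length b.toWord le_rfl (reduced_toWord b)
  have hC₂ne : C₂ ≠ [] := by
    rintro rfl
    rw [List.append_nil] at hB
    have : Reduced (U₂ ++ invRev U₂) := hB ▸ reduced_toWord b
    have := eq_nil_of_reduced_mul_inv this
    subst this
    apply hb
    rw [← mk_toWord (x := b), hB]
    simp [one_eq_mk, invRev_empty]
  have hbw : b = mk (U₂ ++ C₂ ++ invRev U₂) := by rw [← hB, mk_toWord]
  have hredB : Reduced (U₂ ++ C₂ ++ invRev U₂) := hB ▸ reduced_toWord b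
  obtain ⟨hBpow, hBpowRed⟩ := pow_toWord hredB hC₂ hC₂ne hn
  have hweq : U₁ ++ powWord n C₁ ++ invRev U₁ = U₂ ++ powWord n C₂ ++ invRev U₂ := by
    have : (a ^ n).toWord = (b ^ n).toWord := by rw [h]
    rwa [haw, hApow, toWord_mk_eq hApowRed, hbw, hBpow, toWord_mk_eq hBpowRed] at this
  obtain ⟨hU, hC⟩ := uniq hn hC₁ hC₂ hC₁ne hC₂ne hweq
  rw [haw, hbw, hU, hC]

/-- Unique roots, integer exponent. -/
lemma root_unique_z (a b : FreeGroup α) (ha : a ≠ 1) {n : ℤ} (hn : n ≠ 0)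
    (h : a ^ n = b ^ n) : a = b := by
  rcases lt_or_gt_of_ne hn with hneg | hpos
  · have h' : (a⁻¹) ^ (-n).toNat = (b⁻¹) ^ (-n).toNat := by
      have : (a⁻¹) ^ (-n) = (b⁻¹) ^ (-n) := by
        rw [inv_zpow, inv_zpow, zpow_neg, zpow_neg, h]
      rw [← zpow_natCast, ← zpow_natCast, Int.toNat_of_nonneg (by omega)]
      exact this
    have := root_unique (a⁻¹) (b⁻¹) (by simpa using ha) (n := (-n).toNat) (by omega) h'
    exact inv_injective this
  · have h' : a ^ n.toNat = b ^ n.toNat := by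
      rw [← zpow_natCast, ← zpow_natCast, Int.toNat_of_nonneg (by omega)]
      exact h
    exact root_unique a b ha (n := n.toNat) (by omega) h'

end FreeGroupUR

theorem stmt_3 {α : Type*} (a : FreeGroup α) (ha : a ≠ 1) (n : ℤ) (hn : n ≠ 0)
    (g : FreeGroup α) (h : g * a ^ n * g⁻¹ = a ^ n) : g * a = a * g := by
  letI := Classical.decEq α
  have hb : (g * a * g⁻¹) ^ n = a ^ n := by
    rw [conj_zpow, h]
  have hb1 : g * a * g⁻¹ ≠ 1 := by
    intro h1
    apply ha
    have := congrArg (fun x => g⁻¹ * x * g) h1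
    simpa [mul_assoc] using this
  have := FreeGroupUR.root_unique_z (g * a * g⁻¹) a hb1 hn hb
  have h2 : g * a = a * g := by
    have := congrArg (fun x => x * g) this
    simpa [mul_assoc] using this
  exact h2
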